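/- Any mechanism M such that, for every declaration profile d, M(d) is an optimal partition having the minimum number of coalitions among all optimal partitions for d (ties among such partitions broken arbitrarily), is non-obviously manipulable (NOM). -/

import Mathlib

open Finset

/-- FA utility of agent `i` with friend set `t` for a coalition `C` containing her:
`u_i(C) = |C ∩ F_i| − |C ∩ E_i| / n`, where `E_i = N \ (F_i ∪ {i})`. -/
def faUtil (n : ℕ) (t : Finset (Fin n)) (i : Fin n) (C : Finset (Fin n)) : ℚ :=
  ((C ∩ t).card : ℚ) - ((C \ (t ∪ {i})).card : ℚ) / (n : ℚ)

/-- Social welfare of a partition, where agent `j` declares the friend set `F j`. -/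
def faSW (n : ℕ) (F : Fin n → Finset (Fin n))
    (π : Finpartition (univ : Finset (Fin n))) : ℚ :=
  ∑ C ∈ π.parts, ∑ i ∈ C, faUtil n (F i) i C

/-- Utility of agent `i` (with true friend set `t`) for the coalition of `i` in `π`:
since `i` lies in exactly one part, this sum equals `u_i(π(i))`. -/
def faAgentUtil (n : ℕ) (t : Finset (Fin n)) (i : Fin n)
    (π : Finpartition (univ : Finset (Fin n))) : ℚ :=
  ∑ C ∈ π.parts.filter (fun C => i ∈ C), faUtil n t i C

namespace NOMFA
variable {n : ℕ}

lemma filter_parts_eq (π : Finpartition (univ : Finset (Fin n))) (i : Fin n) :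
    π.parts.filter (fun C => i ∈ C) = {π.part i} := by
  ext C
  simp only [mem_filter, mem_singleton]
  constructor
  · rintro ⟨hC, hiC⟩
    exact (π.part_eq_of_mem hC hiC).symm
  · rintro rfl
    exact ⟨π.part_mem.2 (mem_univ i), π.mem_part (mem_univ i)⟩

lemma faAgentUtil_eq (t : Finset (Fin n)) (i : Fin n)
    (π : Finpartition (univ : Finset (Fin n))) :
    faAgentUtil n t i π = faUtil n t i (π.part i) := by
  rw [faAgentUtil, filter_parts_eq, sum_singleton]

lemma faUtil_le_card (t : Finset (Fin n)) (i : Fin n) (C : Finset (Fin n)) :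
    faUtil n t i C ≤ t.card := by
  have h1 : ((C ∩ t).card : ℚ) ≤ t.card := by
    exact_mod_cast Nat.cast_le.2 (card_le_card (inter_subset_right))
  have h2 : (0:ℚ) ≤ ((C \ (t ∪ {i})).card : ℚ) / (n : ℚ) := by positivity
  unfold faUtil
  linarith

lemma sum_inter_card (π : Finpartition (univ : Finset (Fin n))) (S : Finset (Fin n)) :
    ∑ D ∈ π.parts, (D ∩ S).card = S.card := by
  have h1 : ∀ D, (D ∩ S).card = ∑ x ∈ S, if x ∈ D then 1 else 0 := by
    intro D
    rw [inter_comm, ← Finset.card_filter]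
    congr 1
  simp_rw [h1]
  rw [Finset.sum_comm]
  have h2 : ∀ x ∈ S, (∑ D ∈ π.parts, if x ∈ D then 1 else 0) = 1 := by
    intro x _
    rw [← Finset.card_filter, filter_parts_eq π x, card_singleton]
  rw [Finset.sum_congr rfl h2, Finset.sum_const, smul_eq_mul, mul_one]

lemma sum_sq_le (s : Finset (Finset (Fin n))) (f : Finset (Fin n) → ℕ) :
    ∑ D ∈ s, f D * f D ≤ (∑ D ∈ s, f D) * (∑ D ∈ s, f D) := by
  classical
  induction s using Finset.cons_induction with
  | empty => simp
  | cons a s ha ih =>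
    rw [Finset.sum_cons, Finset.sum_cons]
    nlinarith [Nat.zero_le (f a), Nat.zero_le (∑ D ∈ s, f D)]

lemma qsuper (s : Finset (Finset (Fin n))) (f : Finset (Fin n) → ℕ) :
    ∑ D ∈ s, ((f D : ℚ) * ((f D : ℚ) - 1))
      ≤ ((∑ D ∈ s, f D : ℕ) : ℚ) * (((∑ D ∈ s, f D : ℕ) : ℚ) - 1) := by
  have h1 : ∑ D ∈ s, ((f D : ℚ) * ((f D : ℚ) - 1))
      = ((∑ D ∈ s, f D * f D : ℕ) : ℚ) - ((∑ D ∈ s, f D : ℕ) : ℚ) := by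
    push_cast
    rw [← Finset.sum_sub_distrib]
    apply Finset.sum_congr rfl
    intro D _
    ring
  have h2 : ((∑ D ∈ s, f D * f D : ℕ) : ℚ)
      ≤ ((∑ D ∈ s, f D : ℕ) : ℚ) * ((∑ D ∈ s, f D : ℕ) : ℚ) := by
    exact_mod_cast sum_sq_le s f
  rw [h1]
  nlinarith [h2]

lemma NUMZ (n c τ γ Θ B : ℤ) (hγ0 : 0 ≤ γ) (hΘ0 : 0 ≤ Θ)
    (hγτ : γ ≤ τ) (hB : c + B = n) (hτB : τ ≤ B)
    (hv1 : 1 ≤ τ) (hn : n = 1 + Θ + τ) (hc : 1 ≤ c)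
    (hkey : 1 ≤ γ → (n+1)*τ + 1 ≤ 2*c*B) :
    γ*(n+1) + 1 ≤ 2*(Θ+1)*τ ∧ γ*(n+1) + 1 ≤ Θ*(n-1) + 2*τ := by
  rcases lt_or_ge γ 1 with hγ | hγ1
  · have hγe : γ = 0 := by omega
    subst hγe
    constructor
    · nlinarith
    · nlinarith
  have hkey' := hkey hγ1
  have h2τ : 2*τ + 1 ≤ n := by
    by_contra hcon
    push_neg at hcon
    have hcon' : n ≤ 2*τ := by omega
    have e1 : (n-B)*B ≤ (n-τ)*τ := by
      nlinarith [mul_nonneg (by omega : (0:ℤ) ≤ B - τ) (by omega : (0:ℤ) ≤ B + τ - n)]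
    have e2 : 2*c*B = 2*((n-B)*B) := by
      have : c = n - B := by omega
      rw [this]; ring
    have e3 : 2*((n-τ)*τ) ≤ n*τ := by nlinarith
    linarith
  have hΘτ : Θ + 1 = n - τ := by omega
  rcases lt_or_ge (2*τ + 1) n with hcase | hcase
  · -- 2τ + 2 ≤ n
    have hτΘ : τ + 1 ≤ Θ := by omega
    constructor
    · have e1 : γ*(n+1) + 1 ≤ τ*(n+2) := by nlinarith
      have e2 : τ*(n+2) ≤ τ*(2*(n-τ)) := by nlinarith
      have e3 : τ*(2*(n-τ)) = 2*(Θ+1)*τ := by rw [hΘτ]; ring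
      linarith
    · have e1 : γ*(n+1) + 1 ≤ τ*(n+1) + 1 := by nlinarith
      have e2 : τ*(n+1) + 1 ≤ Θ*(n-1) + 2*τ := by nlinarith
      linarith
  · -- 2τ + 1 = n
    have h2 : 2*τ + 1 = n := by omega
    have hk : 0 ≤ (B - τ)*(B - τ - 1) := by
      rcases le_or_gt 1 (B - τ) with h|h
      · nlinarith
      · nlinarith
    have e1 : (n-B)*B ≤ (n-τ)*τ := by nlinarith
    have e2 : 2*c*B = 2*((n-B)*B) := by
      have : c = n - B := by omega
      rw [this]; ring
    have e3 : γ*(n+1) + 1 ≤ 2*((n-τ)*τ) := by nlinarith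
    constructor
    · have : 2*((n-τ)*τ) = 2*(Θ+1)*τ := by rw [hΘτ]; ring
      linarith
    · have : 2*((n-τ)*τ) = Θ*(n-1) + 2*τ := by nlinarith [hΘτ, h2]
      linarith

lemma NUM (n c τ γ Θ B : ℕ)
    (hγτ : γ ≤ τ) (hB : c + B = n) (hτB : τ ≤ B)
    (hv1 : 1 ≤ τ) (hn : n = 1 + Θ + τ) (hc : 1 ≤ c)
    (hkey : 1 ≤ γ → (n+1)*τ + 1 ≤ 2*c*B) :
    γ*(n+1) + 1 ≤ 2*(Θ+1)*τ ∧ γ*(n+1) + 1 ≤ Θ*(n-1) + 2*τ := by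
  have hn1 : 1 ≤ n := by omega
  have := NUMZ (n:ℤ) c τ γ Θ B (by positivity) (by positivity)
    (by exact_mod_cast hγτ) (by exact_mod_cast hB) (by exact_mod_cast hτB)
    (by exact_mod_cast hv1) (by exact_mod_cast hn) (by exact_mod_cast hc)
    (fun h => by
      have : 1 ≤ γ := by exact_mod_cast h
      exact_mod_cast hkey this)
  constructor
  · exact_mod_cast this.1
  · have h2 := this.2
    zify [hn1]
    exact h2

lemma MNUMZ (n a a' x x' b g β γ : ℤ)
    (ha : 0 ≤ a) (ha' : 0 ≤ a') (hx : 0 ≤ x) (hx' : 0 ≤ x')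
    (hb0 : 0 ≤ b) (hg0 : 0 ≤ g) (hβ0 : 0 ≤ β) (hγ0 : 0 ≤ γ)
    (hb : b ≤ β) (hba : b ≤ a) (hgx : g ≤ x) (hgγ : g ≤ γ)
    (hn : n = 1 + (a + a') + (x + x'))
    (H1 : 1 ≤ x + x' → γ*(n+1) + 1 ≤ 2*((a+a')+1)*(x+x'))
    (H2 : 1 ≤ x + x' → γ*(n+1) + 1 ≤ (a+a')*(n-1) + 2*(x+x') + β*(n+1))
    (hne : ¬(a' = 0 ∧ x = 0)) :
    0 < 2*a*a'*n + a'*(n-1) + 2*x*x'*n + (β - b - g)*(n+1) + 2*a*x + 2*x := by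
  have hgexp : (β - b - g)*(n+1) = β*(n+1) - b*(n+1) - g*(n+1) := by ring
  have t1 : 0 ≤ 2*a*a'*n := by
    apply mul_nonneg (mul_nonneg (by linarith) ha') (by omega)
  have t2 : 0 ≤ 2*a*x := by positivity
  have t3 : 0 ≤ (β - b)*(n+1) := mul_nonneg (by omega) (by omega)
  have t4 : b*(n+1) ≤ β*(n+1) := mul_le_mul_of_nonneg_right hb (by omega)
  have t5 : g*(n+1) ≤ γ*(n+1) := mul_le_mul_of_nonneg_right hgγ (by omega)
  have t6 : 0 ≤ a'*(n-1) := mul_nonneg ha' (by omega)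
  rcases eq_or_lt_of_le hx with hx0 | hx1
  · -- x = 0
    have hg : g = 0 := by omega
    have ha'1 : 1 ≤ a' := by
      rcases eq_or_lt_of_le ha' with h | h
      · exact absurd ⟨h.symm, hx0.symm⟩ hne
      · omega
    have hn2 : 2 ≤ n := by omega
    have t7 : 1*(n-1) ≤ a'*(n-1) := mul_le_mul_of_nonneg_right ha'1 (by omega)
    have hxz : x = 0 := hx0.symm
    subst hxz hg
    have e0 : 2*(0:ℤ)*x'*n = 0 := by ring
    nlinarith [t1, t3, t7]
  rcases eq_or_lt_of_le hx' with hx'0 | hx'1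
  · -- x' = 0, x ≥ 1
    have hv1 : 1 ≤ x + x' := by omega
    have hx'z : x' = 0 := hx'0.symm
    subst hx'z
    rcases eq_or_lt_of_le ha' with ha'0 | ha'1
    · -- a' = 0
      have h1 := H1 hv1
      have ha'z : a' = 0 := ha'0.symm
      subst ha'z
      have e1 : 2*(a+0+1)*(x+0) = 2*a*x + 2*x := by ring
      linarith [hgexp, t4, t5]
    · -- a' ≥ 1
      have h2 := H2 hv1
      have e2 : b*(n+1) ≤ a*(n+1) := mul_le_mul_of_nonneg_right hba (by omega)
      have e3 : 2*a*n ≤ 2*a*a'*n := by nlinarith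
      linarith [hgexp, t5, e2, e3, h2, t2]
  · -- x ≥ 1, x' ≥ 1
    have e4 : 0 ≤ 2*x*(x'-1)*n := mul_nonneg (mul_nonneg (by linarith) (by omega)) (by omega)
    have e5 : 2*x*x'*n = 2*x*n + 2*x*(x'-1)*n := by ring
    have e6 : g*(n+1) ≤ x*(n+1) := mul_le_mul_of_nonneg_right hgx (by omega)
    have hn1 : 1 ≤ n := by omega
    have e7 : x*1 ≤ x*n := mul_le_mul_of_nonneg_left hn1 (by linarith)
    linarith [hgexp, t1, t2, t3, t6, e4, e5, e6, e7]

/-- the "trap/wall" declaration profile -/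
def traps (i : Fin n) (T V Dd : Finset (Fin n)) : Fin n → Finset (Fin n) :=
  fun j => if j = i then Dd else if j ∈ T then insert i (T.erase j) else V.erase j

/-- two-block partition {insert i T, V} (V possibly empty) -/
def mkTwo (i : Fin n) (T V : Finset (Fin n)) (hiV : i ∉ V) (hTV : Disjoint T V)
    (hcov : ∀ x : Fin n, x ≠ i → x ∈ T ∨ x ∈ V) : Finpartition (univ : Finset (Fin n)) :=
  Finpartition.ofErase {insert i T, V}
    (by
      rw [Finset.supIndep_iff_pairwiseDisjoint]
      intro a ha b hb hab
      simp only [coe_insert, coe_singleton, Set.mem_insert_iff, Set.mem_singleton_iff] at ha hb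
      have hd : Disjoint (insert i T) V := by
        rw [Finset.disjoint_left]
        intro x hx hxV
        rcases mem_insert.mp hx with rfl | hxT
        · exact hiV hxV
        · exact Finset.disjoint_left.mp hTV hxT hxV
      rcases ha with rfl | rfl <;> rcases hb with rfl | rfl
      · exact absurd rfl hab
      · exact hd
      · exact hd.symm
      · exact absurd rfl hab)
    (by
      rw [Finset.sup_insert, Finset.sup_singleton]
      apply Finset.eq_univ_of_forall
      intro x
      simp only [id, Finset.sup_eq_union, mem_union, mem_insert]
      by_cases hx : x = i
      · exact Or.inl (Or.inl hx)
      · rcases hcov x hx with h | h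
        · exact Or.inl (Or.inr h)
        · exact Or.inr h)

lemma mkTwo_parts (i : Fin n) (T V : Finset (Fin n)) (hiV : i ∉ V) (hTV : Disjoint T V)
    (hcov : ∀ x : Fin n, x ≠ i → x ∈ T ∨ x ∈ V) :
    (mkTwo i T V hiV hTV hcov).parts = ({insert i T, V} : Finset (Finset (Fin n))).erase ∅ :=
  rfl

/-- merging two parts of a finpartition -/
def mergeTwo (π : Finpartition (univ : Finset (Fin n))) (A B : Finset (Fin n))
    (hA : A ∈ π.parts) (hB : B ∈ π.parts) (hAB : A ≠ B) :
    Finpartition (univ : Finset (Fin n)) where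
  parts := insert (A ∪ B) ((π.parts.erase A).erase B)
  supIndep := by
    rw [Finset.supIndep_iff_pairwiseDisjoint]
    intro a ha b hb hab
    simp only [coe_insert, Set.mem_insert_iff, mem_coe, mem_erase] at ha hb
    rcases ha with rfl | ⟨haB, haA, haP⟩ <;> rcases hb with rfl | ⟨hbB, hbA, hbP⟩
    · exact absurd rfl hab
    · exact Finset.disjoint_union_left.mpr
        ⟨π.disjoint hA hbP (Ne.symm hbA), π.disjoint hB hbP (Ne.symm hbB)⟩
    · exact (Finset.disjoint_union_left.mpr
        ⟨π.disjoint hA haP (Ne.symm haA), π.disjoint hB haP (Ne.symm haB)⟩).symm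
    · exact π.disjoint haP hbP hab
  sup_parts := by
    have h1 : π.parts = insert A (insert B ((π.parts.erase A).erase B)) := by
      rw [Finset.insert_erase (Finset.mem_erase.mpr ⟨Ne.symm hAB, hB⟩), Finset.insert_erase hA]
    have h2 := π.sup_parts
    rw [h1] at h2
    rw [Finset.sup_insert] at h2 ⊢
    rw [Finset.sup_insert] at h2
    simp only [id] at h2 ⊢
    have h3 : (A ∪ B) ⊔ ((π.parts.erase A).erase B).sup id
        = A ⊔ (B ⊔ ((π.parts.erase A).erase B).sup id) := by
      rw [← sup_assoc]
      rfl
    rw [h3]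
    exact h2
  bot_notMem := by
    simp only [bot_eq_empty, mem_insert, not_or]
    constructor
    · intro h
      rcases π.nonempty_of_mem_parts hA with ⟨x, hx⟩
      have : x ∈ (∅ : Finset (Fin n)) := h ▸ Finset.mem_union_left _ hx
      exact Finset.notMem_empty x this
    · intro h
      exact π.bot_notMem (Finset.mem_of_mem_erase (Finset.mem_of_mem_erase h))

lemma mergeTwo_parts (π : Finpartition (univ : Finset (Fin n))) (A B : Finset (Fin n))
    (hA : A ∈ π.parts) (hB : B ∈ π.parts) (hAB : A ≠ B) :
    (mergeTwo π A B hA hB hAB).parts = insert (A ∪ B) ((π.parts.erase A).erase B) :=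
  rfl

lemma aunionb_notmem (π : Finpartition (univ : Finset (Fin n))) (A B : Finset (Fin n))
    (hA : A ∈ π.parts) (hB : B ∈ π.parts) (hAB : A ≠ B) :
    A ∪ B ∉ (π.parts.erase A).erase B := by
  intro h
  have hP : A ∪ B ∈ π.parts := Finset.mem_of_mem_erase (Finset.mem_of_mem_erase h)
  have hne : A ∪ B ≠ A := (Finset.mem_erase.mp (Finset.mem_of_mem_erase h)).1
  have hd := π.disjoint hA hP (fun he => hne he.symm)
  rcases π.nonempty_of_mem_parts hA with ⟨x, hx⟩
  exact Finset.disjoint_left.mp hd hx (Finset.mem_union_left _ hx)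

lemma mergeTwo_card (π : Finpartition (univ : Finset (Fin n))) (A B : Finset (Fin n))
    (hA : A ∈ π.parts) (hB : B ∈ π.parts) (hAB : A ≠ B) :
    (mergeTwo π A B hA hB hAB).parts.card + 1 = π.parts.card := by
  have h0 := aunionb_notmem π A B hA hB hAB
  have h1 : (mergeTwo π A B hA hB hAB).parts.card
      = ((π.parts.erase A).erase B).card + 1 := Finset.card_insert_of_notMem h0
  have h2 : ((π.parts.erase A).erase B).card = π.parts.card - 1 - 1 := by
    rw [Finset.card_erase_of_mem (Finset.mem_erase.mpr ⟨Ne.symm hAB, hB⟩),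
      Finset.card_erase_of_mem hA]
  have h3 : 2 ≤ π.parts.card := by
    have := Finset.card_le_card (show {A, B} ⊆ π.parts by
      intro x hx; rcases mem_insert.mp hx with rfl | hx
      · exact hA
      · exact (mem_singleton.mp hx) ▸ hB)
    rwa [Finset.card_pair hAB] at this
  omega

lemma faSW_mergeTwo (d : Fin n → Finset (Fin n)) (π : Finpartition (univ : Finset (Fin n)))
    (A B : Finset (Fin n)) (hA : A ∈ π.parts) (hB : B ∈ π.parts) (hAB : A ≠ B) :
    faSW n d (mergeTwo π A B hA hB hAB)
      + (∑ j ∈ A, faUtil n (d j) j A) + (∑ j ∈ B, faUtil n (d j) j B)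
    = faSW n d π + ∑ j ∈ A ∪ B, faUtil n (d j) j (A ∪ B) := by
  have h0 := aunionb_notmem π A B hA hB hAB
  have h1 : π.parts = insert A (insert B ((π.parts.erase A).erase B)) := by
    rw [Finset.insert_erase (Finset.mem_erase.mpr ⟨Ne.symm hAB, hB⟩), Finset.insert_erase hA]
  have hAni : A ∉ insert B ((π.parts.erase A).erase B) := by
    intro h
    rcases mem_insert.mp h with h' | h'
    · exact hAB h'
    · exact (Finset.notMem_erase A _) (Finset.mem_of_mem_erase h')
  have hBni : B ∉ (π.parts.erase A).erase B := Finset.notMem_erase _ _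
  have h2 : faSW n d π = (∑ j ∈ A, faUtil n (d j) j A) + ((∑ j ∈ B, faUtil n (d j) j B)
      + ∑ C ∈ (π.parts.erase A).erase B, ∑ j ∈ C, faUtil n (d j) j C) := by
    have e1 : (∑ j ∈ A, faUtil n (d j) j A)
        + ∑ C ∈ π.parts.erase A, ∑ j ∈ C, faUtil n (d j) j C
        = ∑ C ∈ π.parts, ∑ j ∈ C, faUtil n (d j) j C :=
      Finset.add_sum_erase _ (fun C => ∑ j ∈ C, faUtil n (d j) j C) hA
    have e2 : (∑ j ∈ B, faUtil n (d j) j B)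
        + ∑ C ∈ (π.parts.erase A).erase B, ∑ j ∈ C, faUtil n (d j) j C
        = ∑ C ∈ π.parts.erase A, ∑ j ∈ C, faUtil n (d j) j C :=
      Finset.add_sum_erase _ (fun C => ∑ j ∈ C, faUtil n (d j) j C) (Finset.mem_erase.mpr ⟨Ne.symm hAB, hB⟩)
    rw [show faSW n d π = ∑ C ∈ π.parts, ∑ j ∈ C, faUtil n (d j) j C from rfl, ← e1, ← e2]
  rw [faSW, mergeTwo_parts, Finset.sum_insert h0, h2]
  ring

lemma faUtil_union (F : Finset (Fin n)) (j : Fin n) (A B : Finset (Fin n))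
    (hdisj : Disjoint A B) :
    faUtil n F j (A ∪ B)
      = faUtil n F j A + ((B ∩ F).card : ℚ) - ((B \ (F ∪ {j})).card : ℚ) / n := by
  unfold faUtil
  have h1 : (A ∪ B) ∩ F = (A ∩ F) ∪ (B ∩ F) := Finset.union_inter_distrib_right A B F
  have h2 : (A ∪ B) \ (F ∪ {j}) = (A \ (F ∪ {j})) ∪ (B \ (F ∪ {j})) :=
    Finset.union_sdiff_distrib A B (F ∪ {j})
  rw [h1, h2, Finset.card_union_of_disjoint (hdisj.mono inter_subset_left inter_subset_left),
    Finset.card_union_of_disjoint (hdisj.mono sdiff_subset sdiff_subset)]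
  push_cast
  ring

/-- harvesting the strict optimality facts -/
lemma star (t : Finset (Fin n)) (i : Fin n) (d : Fin n → Finset (Fin n)) (hdit : d i = t)
    (π : Finpartition (univ : Finset (Fin n)))
    (hopt : ∀ σ, faSW n d σ ≤ faSW n d π)
    (hmin : ∀ σ : Finpartition (univ : Finset (Fin n)),
      (∀ σ', faSW n d σ' ≤ faSW n d σ) → π.parts.card ≤ σ.parts.card)
    (P : Finset (Fin n)) (hP : P ∈ π.parts) (hPne : P ≠ π.part i) :
    (n+1) * (P ∩ t).card + 1 ≤ 2 * (π.part i).card * P.card := by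
  have hn : 0 < n := Fin.pos i
  set A := π.part i with hAdef
  have hA : A ∈ π.parts := π.part_mem.2 (mem_univ i)
  have hiA : i ∈ A := π.mem_part (mem_univ i)
  have hAB : A ≠ P := fun h => hPne (h.symm)
  have hdisj : Disjoint A P := π.disjoint hA hP hAB
  -- strictness
  have hlt : faSW n d (mergeTwo π A P hA hP hAB) < faSW n d π := by
    rcases lt_or_eq_of_le (hopt (mergeTwo π A P hA hP hAB)) with h | h
    · exact h
    · exfalso
      have hopt' : ∀ σ', faSW n d σ' ≤ faSW n d (mergeTwo π A P hA hP hAB) := by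
        intro σ'
        have := hopt σ'
        linarith
      have h2 := hmin (mergeTwo π A P hA hP hAB) hopt'
      have hc := mergeTwo_card π A P hA hP hAB
      omega
  -- the merge value identity
  have hmv := faSW_mergeTwo d π A P hA hP hAB
  -- lower bound for the union sum
  have hAsplit : ∑ j ∈ A ∪ P, faUtil n (d j) j (A ∪ P)
      = (∑ j ∈ A, faUtil n (d j) j (A ∪ P)) + (∑ j ∈ P, faUtil n (d j) j (A ∪ P)) :=
    Finset.sum_union hdisj
  have hbound1 : ∑ j ∈ A, faUtil n (d j) j (A ∪ P)
      ≥ (∑ j ∈ A, faUtil n (d j) j A) + ((P ∩ t).card : ℚ)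
        - ((P \ t).card : ℚ)/n - ((A.card : ℚ) - 1) * P.card / n := by
    have hsplit : ∀ j ∈ A, faUtil n (d j) j (A ∪ P)
        = faUtil n (d j) j A + ((P ∩ d j).card : ℚ) - ((P \ (d j ∪ {j})).card : ℚ)/n :=
      fun j _ => faUtil_union (d j) j A P hdisj
    rw [Finset.sum_congr rfl hsplit]
    rw [← Finset.add_sum_erase _ _ hiA, ← Finset.add_sum_erase _ (fun j => faUtil n (d j) j A) hiA]
    have hiterm : faUtil n (d i) i A + ((P ∩ d i).card : ℚ) - ((P \ (d i ∪ {i})).card : ℚ)/n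
        ≥ faUtil n (d i) i A + ((P ∩ t).card : ℚ) - ((P \ t).card : ℚ)/n := by
      rw [hdit]
      have : ((P \ (t ∪ {i})).card : ℚ) ≤ ((P \ t).card : ℚ) := by
        exact_mod_cast Nat.cast_le.2 (card_le_card (sdiff_subset_sdiff (le_refl _) (subset_union_left)))
      have hn' : (0:ℚ) < n := by exact_mod_cast hn
      gcongr
    have hrest : ∑ j ∈ A.erase i,
        (faUtil n (d j) j A + ((P ∩ d j).card : ℚ) - ((P \ (d j ∪ {j})).card : ℚ)/n)
        ≥ (∑ j ∈ A.erase i, faUtil n (d j) j A) - ((A.card : ℚ) - 1) * P.card / n := by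
      have : ∀ j ∈ A.erase i,
          faUtil n (d j) j A + ((P ∩ d j).card : ℚ) - ((P \ (d j ∪ {j})).card : ℚ)/n
          ≥ faUtil n (d j) j A - (P.card : ℚ)/n := by
        intro j _
        have h1 : (0:ℚ) ≤ ((P ∩ d j).card : ℚ) := by positivity
        have h2 : ((P \ (d j ∪ {j})).card : ℚ) ≤ (P.card : ℚ) := by
          exact_mod_cast Nat.cast_le.2 (card_le_card sdiff_subset)
        have hn' : (0:ℚ) < n := by exact_mod_cast hn
        have h3 : ((P \ (d j ∪ {j})).card : ℚ)/n ≤ (P.card : ℚ)/n := by gcongr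
        linarith
      calc ∑ j ∈ A.erase i,
          (faUtil n (d j) j A + ((P ∩ d j).card : ℚ) - ((P \ (d j ∪ {j})).card : ℚ)/n)
          ≥ ∑ j ∈ A.erase i, (faUtil n (d j) j A - (P.card : ℚ)/n) := Finset.sum_le_sum this
        _ = (∑ j ∈ A.erase i, faUtil n (d j) j A) - (A.erase i).card • ((P.card : ℚ)/n) := by
            rw [Finset.sum_sub_distrib, Finset.sum_const]
        _ = (∑ j ∈ A.erase i, faUtil n (d j) j A) - ((A.card : ℚ) - 1) * P.card / n := by
            rw [Finset.card_erase_of_mem hiA]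
            have h1 : (1:ℕ) ≤ A.card := Finset.card_pos.mpr ⟨i, hiA⟩
            rw [nsmul_eq_mul, Nat.cast_sub h1]
            push_cast
            ring
    linarith
  have hbound2 : ∑ j ∈ P, faUtil n (d j) j (A ∪ P)
      ≥ (∑ j ∈ P, faUtil n (d j) j P) - (A.card : ℚ) * P.card / n := by
    have hsplit : ∀ j ∈ P, faUtil n (d j) j (A ∪ P)
        = faUtil n (d j) j P + ((A ∩ d j).card : ℚ) - ((A \ (d j ∪ {j})).card : ℚ)/n := by
      intro j _
      rw [Finset.union_comm]
      exact faUtil_union (d j) j P A hdisj.symm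
    rw [Finset.sum_congr rfl hsplit]
    have : ∀ j ∈ P,
        faUtil n (d j) j P + ((A ∩ d j).card : ℚ) - ((A \ (d j ∪ {j})).card : ℚ)/n
        ≥ faUtil n (d j) j P - (A.card : ℚ)/n := by
      intro j _
      have h1 : (0:ℚ) ≤ ((A ∩ d j).card : ℚ) := by positivity
      have h2 : ((A \ (d j ∪ {j})).card : ℚ) ≤ (A.card : ℚ) := by
        exact_mod_cast Nat.cast_le.2 (card_le_card sdiff_subset)
      have hn' : (0:ℚ) < n := by exact_mod_cast hn
      have h3 : ((A \ (d j ∪ {j})).card : ℚ)/n ≤ (A.card : ℚ)/n := by gcongr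
      linarith
    calc ∑ j ∈ P, (faUtil n (d j) j P + ((A ∩ d j).card : ℚ) - ((A \ (d j ∪ {j})).card : ℚ)/n)
        ≥ ∑ j ∈ P, (faUtil n (d j) j P - (A.card : ℚ)/n) := Finset.sum_le_sum this
      _ = (∑ j ∈ P, faUtil n (d j) j P) - P.card • ((A.card : ℚ)/n) := by
          rw [Finset.sum_sub_distrib, Finset.sum_const]
      _ = (∑ j ∈ P, faUtil n (d j) j P) - (A.card : ℚ) * P.card / n := by
          push_cast
          ring
  -- combine
  have hfinal : ((P ∩ t).card : ℚ)
      - (((P \ t).card : ℚ) + ((A.card : ℚ) - 1) * P.card + (A.card : ℚ) * P.card)/n < 0 := by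
    have hgain : faSW n d (mergeTwo π A P hA hP hAB) - faSW n d π
        = (∑ j ∈ A ∪ P, faUtil n (d j) j (A ∪ P))
          - (∑ j ∈ A, faUtil n (d j) j A) - (∑ j ∈ P, faUtil n (d j) j P) := by linarith
    have hlt2 : (∑ j ∈ A ∪ P, faUtil n (d j) j (A ∪ P))
        - (∑ j ∈ A, faUtil n (d j) j A) - (∑ j ∈ P, faUtil n (d j) j P) < 0 := by
      rw [← hgain]
      linarith
    rw [hAsplit] at hlt2
    have hsum : ((P ∩ t).card : ℚ) - ((P \ t).card : ℚ)/n - ((A.card : ℚ) - 1) * P.card / n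
        - (A.card : ℚ) * P.card / n < 0 := by linarith
    have : (((P \ t).card : ℚ) + ((A.card : ℚ) - 1) * P.card + (A.card : ℚ) * P.card)/n
        = ((P \ t).card : ℚ)/n + ((A.card : ℚ) - 1) * P.card / n + (A.card : ℚ) * P.card / n := by
      ring
    rw [this]
    linarith
  -- translate to ℕ
  have hPt : ((P \ t).card : ℚ) = (P.card : ℚ) - ((P ∩ t).card : ℚ) := by
    have := Finset.card_inter_add_card_sdiff P t
    have hc : ((P ∩ t).card : ℚ) + ((P \ t).card : ℚ) = (P.card : ℚ) := by exact_mod_cast this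
    linarith
  have hn' : (0:ℚ) < n := by exact_mod_cast hn
  have hq : ((n:ℚ)+1) * ((P ∩ t).card : ℚ) < 2 * (A.card : ℚ) * P.card := by
    rw [hPt] at hfinal
    have h3 : ((P ∩ t).card : ℚ) * n
        < (P.card : ℚ) - ((P ∩ t).card : ℚ) + ((A.card : ℚ) - 1) * P.card + (A.card : ℚ) * P.card := by
      have := mul_lt_mul_of_pos_right (show ((P ∩ t).card : ℚ)
          < ((P.card : ℚ) - ((P ∩ t).card : ℚ) + ((A.card : ℚ) - 1) * P.card
            + (A.card : ℚ) * P.card)/n from by linarith) hn'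
      rw [div_mul_cancel₀] at this
      · linarith
      · linarith
    nlinarith
  have : (n+1) * (P ∩ t).card < 2 * A.card * P.card := by exact_mod_cast hq
  omega

section SumLemmas

variable {i : Fin n} {T V Dd : Finset (Fin n)}
  (hiT : i ∉ T) (hiV : i ∉ V) (hTV : Disjoint T V)
  (hcov : ∀ x : Fin n, x ≠ i → x ∈ T ∨ x ∈ V) (hiD : i ∉ Dd)

include hiT hiV hTV hcov in
/-- value of a part not containing i -/
lemma sum_util_noI (D : Finset (Fin n)) (hD : i ∉ D) :
    ∑ j ∈ D, faUtil n (traps i T V Dd j) j D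
      = ((D∩T).card : ℚ) * ((D∩T).card - 1) + ((D∩V).card : ℚ) * ((D∩V).card - 1)
        - 2 * ((D∩T).card : ℚ) * ((D∩V).card) / n := by
  have hTV' : ∀ {x : Fin n}, x ∈ T → x ∉ V := fun hx => Finset.disjoint_left.mp hTV hx
  have hsplit : D = (D∩T) ∪ (D∩V) := by
    ext x
    simp only [mem_union, mem_inter]
    constructor
    · intro hx
      rcases hcov x (by rintro rfl; exact hD hx) with h | h
      · exact Or.inl ⟨hx, h⟩
      · exact Or.inr ⟨hx, h⟩
    · tauto
  have hdisj : Disjoint (D∩T) (D∩V) := by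
    rw [Finset.disjoint_left]
    intro x hx hy
    exact hTV' (mem_inter.mp hx).2 (mem_inter.mp hy).2
  rw [show ∑ j ∈ D, faUtil n (traps i T V Dd j) j D
      = ∑ j ∈ (D∩T) ∪ (D∩V), faUtil n (traps i T V Dd j) j D from by rw [← hsplit]]
  rw [Finset.sum_union hdisj]
  have hT1 : ∀ j ∈ D∩T, faUtil n (traps i T V Dd j) j D
      = (((D∩T).card : ℚ) - 1) - ((D∩V).card : ℚ) / n := by
    intro j hj
    have hjD : j ∈ D := (mem_inter.mp hj).1
    have hjT : j ∈ T := (mem_inter.mp hj).2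
    have hji : j ≠ i := by rintro rfl; exact hD hjD
    have htr : traps i T V Dd j = insert i (T.erase j) := by
      simp [traps, hji, hjT]
    have h1 : D ∩ insert i (T.erase j) = (D∩T).erase j := by
      ext x
      simp only [mem_inter, mem_insert, mem_erase]
      constructor
      · rintro ⟨hxD, rfl | ⟨hne, hxT⟩⟩
        · exact absurd hxD hD
        · exact ⟨hne, hxD, hxT⟩
      · rintro ⟨hne, hxD, hxT⟩
        exact ⟨hxD, Or.inr ⟨hne, hxT⟩⟩
    have h2 : D \ (insert i (T.erase j) ∪ {j}) = D ∩ V := by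
      have : insert i (T.erase j) ∪ {j} = insert i T := by
        ext x
        simp only [mem_union, mem_insert, mem_erase, mem_singleton]
        constructor
        · rintro ((rfl | ⟨_, hxT⟩) | rfl)
          · exact Or.inl rfl
          · exact Or.inr hxT
          · exact Or.inr hjT
        · rintro (rfl | hxT)
          · exact Or.inl (Or.inl rfl)
          · by_cases hxj : x = j
            · exact Or.inr hxj
            · exact Or.inl (Or.inr ⟨hxj, hxT⟩)
      rw [this]
      ext x
      simp only [mem_sdiff, mem_insert, mem_inter, not_or]
      constructor
      · rintro ⟨hxD, hxi, hxT⟩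
        rcases hcov x hxi with h | h
        · exact absurd h hxT
        · exact ⟨hxD, h⟩
      · rintro ⟨hxD, hxV⟩
        exact ⟨hxD, fun h => hiV (h ▸ hxV), fun h => hTV' h hxV⟩
    rw [htr]
    unfold faUtil
    rw [h1, h2]
    have hcard : ((D∩T).erase j).card = (D∩T).card - 1 := Finset.card_erase_of_mem hj
    rw [hcard]
    have : (1:ℕ) ≤ (D∩T).card := Finset.card_pos.mpr ⟨j, hj⟩
    push_cast [Nat.cast_sub this]
    ring
  have hV1 : ∀ j ∈ D∩V, faUtil n (traps i T V Dd j) j D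
      = (((D∩V).card : ℚ) - 1) - ((D∩T).card : ℚ) / n := by
    intro j hj
    have hjD : j ∈ D := (mem_inter.mp hj).1
    have hjV : j ∈ V := (mem_inter.mp hj).2
    have hji : j ≠ i := by rintro rfl; exact hD hjD
    have hjT : j ∉ T := fun h => hTV' h hjV
    have htr : traps i T V Dd j = V.erase j := by
      simp [traps, hji, hjT]
    have h1 : D ∩ (V.erase j) = (D∩V).erase j := by
      ext x
      simp only [mem_inter, mem_erase]
      tauto
    have h2 : D \ (V.erase j ∪ {j}) = D ∩ T := by
      have : V.erase j ∪ {j} = V := by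
        ext x
        simp only [mem_union, mem_erase, mem_singleton]
        constructor
        · rintro (⟨_, h⟩ | rfl) <;> [exact h; exact hjV]
        · intro hxV
          by_cases hxj : x = j
          · exact Or.inr hxj
          · exact Or.inl ⟨hxj, hxV⟩
      rw [this]
      ext x
      simp only [mem_sdiff, mem_inter]
      constructor
      · rintro ⟨hxD, hxV⟩
        rcases hcov x (by rintro rfl; exact hD hxD) with h | h
        · exact ⟨hxD, h⟩
        · exact absurd h hxV
      · rintro ⟨hxD, hxT⟩
        exact ⟨hxD, hTV' hxT⟩
    rw [htr]
    unfold faUtil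
    rw [h1, h2]
    have hcard : ((D∩V).erase j).card = (D∩V).card - 1 := Finset.card_erase_of_mem hj
    rw [hcard]
    have : (1:ℕ) ≤ (D∩V).card := Finset.card_pos.mpr ⟨j, hj⟩
    push_cast [Nat.cast_sub this]
    ring
  rw [Finset.sum_congr rfl hT1, Finset.sum_congr rfl hV1]
  rw [Finset.sum_const, Finset.sum_const]
  push_cast
  by_cases hn0 : (n:ℚ) = 0
  · rw [hn0]
    simp
  · field_simp
    linear_combination (-2*((D∩T).card : ℚ)*((D∩V).card : ℚ) - (n:ℚ)*((D∩T).card : ℚ) + (n:ℚ)*((D∩T).card : ℚ)^2 - (n:ℚ)*((D∩V).card : ℚ) + (n:ℚ)*((D∩V).card : ℚ)^2) * (mul_inv_cancel₀ hn0)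

include hiT hiV hTV hcov hiD in
/-- value of the part containing i -/
lemma sum_util_I (D : Finset (Fin n)) (hD : i ∈ D) :
    ∑ j ∈ D, faUtil n (traps i T V Dd j) j D
      = ((D∩T).card : ℚ) * ((D∩T).card) + ((D∩V).card : ℚ) * ((D∩V).card - 1)
        + ((D∩Dd).card : ℚ)
        - ( ((D∩T).card : ℚ) * ((D∩V).card) + ((D∩V).card : ℚ) * (((D∩T).card : ℚ) + 1)
            + (((D∩T).card : ℚ) + ((D∩V).card : ℚ) - ((D∩Dd).card : ℚ)) ) / n := by
  have hTV' : ∀ {x : Fin n}, x ∈ T → x ∉ V := fun hx => Finset.disjoint_left.mp hTV hx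
  have hiDT : i ∉ D∩T := fun h => hiT (mem_inter.mp h).2
  have hiDV : i ∉ D∩V := fun h => hiV (mem_inter.mp h).2
  have hsplit : D.erase i = (D∩T) ∪ (D∩V) := by
    ext x
    simp only [mem_union, mem_inter, mem_erase]
    constructor
    · rintro ⟨hxi, hx⟩
      rcases hcov x hxi with h | h
      · exact Or.inl ⟨hx, h⟩
      · exact Or.inr ⟨hx, h⟩
    · rintro (⟨hx, h⟩ | ⟨hx, h⟩)
      · exact ⟨fun he => hiT (he ▸ h), hx⟩
      · exact ⟨fun he => hiV (he ▸ h), hx⟩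
  have hdisj : Disjoint (D∩T) (D∩V) := by
    rw [Finset.disjoint_left]
    intro x hx hy
    exact hTV' (mem_inter.mp hx).2 (mem_inter.mp hy).2
  have hcardD : (D.card : ℚ) = 1 + (D∩T).card + (D∩V).card := by
    have h1 : D.card = (D.erase i).card + 1 := by
      rw [Finset.card_erase_of_mem hD]
      have : 1 ≤ D.card := Finset.card_pos.mpr ⟨i, hD⟩
      omega
    rw [h1, hsplit, Finset.card_union_of_disjoint hdisj]
    push_cast
    ring
  rw [← Finset.add_sum_erase D _ hD, hsplit, Finset.sum_union hdisj]
  -- the i term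
  have hIterm : faUtil n (traps i T V Dd i) i D
      = ((D∩Dd).card : ℚ)
        - (((D∩T).card : ℚ) + ((D∩V).card : ℚ) - ((D∩Dd).card : ℚ)) / n := by
    have htr : traps i T V Dd i = Dd := by simp [traps]
    rw [htr]
    unfold faUtil
    have h2 : D ∩ (Dd ∪ {i}) = insert i (D ∩ Dd) := by
      ext x
      simp only [mem_inter, mem_union, mem_insert, mem_singleton]
      constructor
      · rintro ⟨hxD, h | rfl⟩
        · exact Or.inr ⟨hxD, h⟩
        · exact Or.inl rfl
      · rintro (rfl | ⟨hxD, h⟩)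
        · exact ⟨hD, Or.inr rfl⟩
        · exact ⟨hxD, Or.inl h⟩
    have h3 : (D ∩ (Dd ∪ {i})).card + (D \ (Dd ∪ {i})).card = D.card :=
      Finset.card_inter_add_card_sdiff D (Dd ∪ {i})
    have h4 : (D ∩ (Dd ∪ {i})).card = (D∩Dd).card + 1 := by
      rw [h2, Finset.card_insert_of_notMem (fun h => hiD (mem_inter.mp h).2)]
    have h5 : ((D \ (Dd ∪ {i})).card : ℚ)
        = ((D∩T).card : ℚ) + ((D∩V).card : ℚ) - ((D∩Dd).card : ℚ) := by
      have := h3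
      rw [h4] at this
      have hc : ((D∩Dd).card : ℚ) + 1 + ((D \ (Dd ∪ {i})).card : ℚ) = (D.card : ℚ) := by
        exact_mod_cast congrArg (Nat.cast : ℕ → ℚ) this
      rw [hcardD] at hc
      linarith
    rw [h5]
  rw [hIterm]
  have hT1 : ∀ j ∈ D∩T, faUtil n (traps i T V Dd j) j D
      = (((D∩T).card : ℚ)) - ((D∩V).card : ℚ) / n := by
    intro j hj
    have hjD : j ∈ D := (mem_inter.mp hj).1
    have hjT : j ∈ T := (mem_inter.mp hj).2
    have hji : j ≠ i := by rintro rfl; exact hiT hjT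
    have htr : traps i T V Dd j = insert i (T.erase j) := by
      simp [traps, hji, hjT]
    have h1 : D ∩ insert i (T.erase j) = insert i ((D∩T).erase j) := by
      ext x
      simp only [mem_inter, mem_insert, mem_erase]
      constructor
      · rintro ⟨hxD, rfl | ⟨hne, hxT⟩⟩
        · exact Or.inl rfl
        · exact Or.inr ⟨hne, hxD, hxT⟩
      · rintro (rfl | ⟨hne, hxD, hxT⟩)
        · exact ⟨hD, Or.inl rfl⟩
        · exact ⟨hxD, Or.inr ⟨hne, hxT⟩⟩
    have h2 : D \ (insert i (T.erase j) ∪ {j}) = D ∩ V := by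
      have huj : insert i (T.erase j) ∪ {j} = insert i T := by
        ext x
        simp only [mem_union, mem_insert, mem_erase, mem_singleton]
        constructor
        · rintro ((rfl | ⟨_, hxT⟩) | rfl)
          · exact Or.inl rfl
          · exact Or.inr hxT
          · exact Or.inr hjT
        · rintro (rfl | hxT)
          · exact Or.inl (Or.inl rfl)
          · by_cases hxj : x = j
            · exact Or.inr hxj
            · exact Or.inl (Or.inr ⟨hxj, hxT⟩)
      rw [huj]
      ext x
      simp only [mem_sdiff, mem_insert, mem_inter, not_or]
      constructor
      · rintro ⟨hxD, hxi, hxT⟩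
        rcases hcov x hxi with h | h
        · exact absurd h hxT
        · exact ⟨hxD, h⟩
      · rintro ⟨hxD, hxV⟩
        exact ⟨hxD, fun h => hiV (h ▸ hxV), fun h => hTV' h hxV⟩
    rw [htr]
    unfold faUtil
    rw [h1, h2]
    have hcard : (insert i ((D∩T).erase j)).card = (D∩T).card := by
      rw [Finset.card_insert_of_notMem (fun h => hiDT (Finset.erase_subset _ _ h)),
        Finset.card_erase_of_mem hj]
      have : 1 ≤ (D∩T).card := Finset.card_pos.mpr ⟨j, hj⟩
      omega
    rw [hcard]
  have hV1 : ∀ j ∈ D∩V, faUtil n (traps i T V Dd j) j D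
      = (((D∩V).card : ℚ) - 1) - (((D∩T).card : ℚ) + 1) / n := by
    intro j hj
    have hjD : j ∈ D := (mem_inter.mp hj).1
    have hjV : j ∈ V := (mem_inter.mp hj).2
    have hji : j ≠ i := by rintro rfl; exact hiV hjV
    have hjT : j ∉ T := fun h => hTV' h hjV
    have htr : traps i T V Dd j = V.erase j := by
      simp [traps, hji, hjT]
    have h1 : D ∩ (V.erase j) = (D∩V).erase j := by
      ext x
      simp only [mem_inter, mem_erase]
      tauto
    have h2 : D \ (V.erase j ∪ {j}) = insert i (D ∩ T) := by
      have huj : V.erase j ∪ {j} = V := by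
        ext x
        simp only [mem_union, mem_erase, mem_singleton]
        constructor
        · rintro (⟨_, h⟩ | rfl) <;> [exact h; exact hjV]
        · intro hxV
          by_cases hxj : x = j
          · exact Or.inr hxj
          · exact Or.inl ⟨hxj, hxV⟩
      rw [huj]
      ext x
      simp only [mem_sdiff, mem_inter, mem_insert]
      constructor
      · rintro ⟨hxD, hxV⟩
        by_cases hxi : x = i
        · exact Or.inl hxi
        · rcases hcov x hxi with h | h
          · exact Or.inr ⟨hxD, h⟩
          · exact absurd h hxV
      · rintro (rfl | ⟨hxD, hxT⟩)
        · exact ⟨hD, hiV⟩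
        · exact ⟨hxD, hTV' hxT⟩
    rw [htr]
    unfold faUtil
    rw [h1, h2]
    have hc1 : ((D∩V).erase j).card = (D∩V).card - 1 := Finset.card_erase_of_mem hj
    have hc2 : (insert i (D∩T)).card = (D∩T).card + 1 :=
      Finset.card_insert_of_notMem hiDT
    rw [hc1, hc2]
    have : (1:ℕ) ≤ (D∩V).card := Finset.card_pos.mpr ⟨j, hj⟩
    push_cast [Nat.cast_sub this]
    ring
  rw [Finset.sum_congr rfl hT1, Finset.sum_congr rfl hV1]
  rw [Finset.sum_const, Finset.sum_const]
  by_cases hn0 : (n:ℚ) = 0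
  · rw [hn0]
    simp
    ring
  · field_simp
    linear_combination (-2*((D∩T).card : ℚ)*((D∩V).card : ℚ) - ((D∩V).card : ℚ) + (n:ℚ)*((D∩T).card : ℚ)^2 - (n:ℚ)*((D∩V).card : ℚ) + (n:ℚ)*((D∩V).card : ℚ)^2) * (mul_inv_cancel₀ hn0)

include hiT hiV hTV hcov hiD in
lemma faSW_mkTwo :
    faSW n (traps i T V Dd) (mkTwo i T V hiV hTV hcov)
      = (T.card:ℚ)*(T.card:ℚ) + ((Dd∩T).card:ℚ)
        - ((T.card:ℚ) - ((Dd∩T).card:ℚ))/n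
        + (V.card:ℚ)*((V.card:ℚ)-1) := by
  have hAne : (insert i T : Finset (Fin n)).Nonempty := insert_nonempty i T
  have hiTT : (insert i T) ∩ T = T := Finset.inter_eq_right.mpr (Finset.subset_insert i T)
  have hiTV : (insert i T) ∩ V = ∅ := by
    ext z
    simp only [mem_inter, mem_insert, notMem_empty, iff_false, not_and]
    rintro (rfl | hzT)
    · exact hiV
    · exact fun hzV => Finset.disjoint_left.mp hTV hzT hzV
  have hiTD : (insert i T) ∩ Dd = Dd ∩ T := by
    ext z
    simp only [mem_inter, mem_insert]
    constructor
    · rintro ⟨rfl | hzT, hzD⟩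
      · exact absurd hzD hiD
      · exact ⟨hzD, hzT⟩
    · rintro ⟨hzD, hzT⟩
      exact ⟨Or.inr hzT, hzD⟩
  have hval := sum_util_I hiT hiV hTV hcov hiD (insert i T) (mem_insert_self i T)
  rw [hiTT, hiTV, hiTD] at hval
  simp only [card_empty, Nat.cast_zero] at hval
  by_cases hV : V = ∅
  · subst hV
    have hparts : (mkTwo i T ∅ hiV hTV hcov).parts = {insert i T} := by
      rw [mkTwo_parts]
      ext z
      simp only [mem_erase, mem_insert, mem_singleton]
      constructor
      · rintro ⟨hz, h | h⟩
        · exact h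
        · exact absurd h hz
      · intro h
        subst h
        exact ⟨hAne.ne_empty, Or.inl rfl⟩
    rw [faSW, hparts, Finset.sum_singleton, hval]
    simp
  · have hne : (insert i T : Finset (Fin n)) ≠ V := fun h => hiV (h ▸ mem_insert_self i T)
    have hparts : (mkTwo i T V hiV hTV hcov).parts = {insert i T, V} := by
      rw [mkTwo_parts]
      apply Finset.erase_eq_of_notMem
      simp only [mem_insert, mem_singleton]
      push_neg
      exact ⟨fun h => hAne.ne_empty h.symm, fun h => hV h.symm⟩
    rw [faSW, hparts, Finset.sum_pair hne, hval,
      sum_util_noI hiT hiV hTV hcov (D := V) hiV]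
    have hVT : V ∩ T = ∅ := by
      rw [← Finset.disjoint_iff_inter_eq_empty]
      exact hTV.symm
    rw [hVT, Finset.inter_self]
    simp only [card_empty, Nat.cast_zero]
    ring

include hiT hiV hTV hcov hiD in
lemma master
    (H1 : 1 ≤ V.card → (Dd ∩ V).card * (n+1) + 1 ≤ 2*(T.card+1)*V.card)
    (H2 : 1 ≤ V.card → (Dd ∩ V).card * (n+1) + 1
        ≤ T.card*(n-1) + 2*V.card + (Dd ∩ T).card * (n+1))
    (σ : Finpartition (univ : Finset (Fin n)))
    (hopt : faSW n (traps i T V Dd) (mkTwo i T V hiV hTV hcov) ≤ faSW n (traps i T V Dd) σ) :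
    σ.part i = insert i T := by
  by_contra hnePart
  have hn0 : 0 < n := Fin.pos i
  have hn0' : (0:ℚ) < n := by exact_mod_cast hn0
  set C := σ.part i with hCdef
  have hC : C ∈ σ.parts := σ.part_mem.2 (mem_univ i)
  have hiC : i ∈ C := σ.mem_part (mem_univ i)
  -- global cardinality
  have hcards : 1 + T.card + V.card = n := by
    have h1 : insert i (T ∪ V) = (univ : Finset (Fin n)) := by
      apply Finset.eq_univ_of_forall
      intro z
      simp only [mem_insert, mem_union]
      by_cases hz : z = i
      · exact Or.inl hz
      · rcases hcov z hz with h | h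
        · exact Or.inr (Or.inl h)
        · exact Or.inr (Or.inr h)
    have h2 : (insert i (T ∪ V)).card = n := by
      rw [h1, Finset.card_univ, Fintype.card_fin]
    rw [Finset.card_insert_of_notMem (by
        simp only [mem_union]
        rintro (h | h)
        · exact hiT h
        · exact hiV h), Finset.card_union_of_disjoint hTV] at h2
    omega
  -- splitting C ∩ Dd
  have hbg : (C∩Dd).card = (C∩(T∩Dd)).card + (C∩(V∩Dd)).card := by
    have hsplit : C∩Dd = (C∩(T∩Dd)) ∪ (C∩(V∩Dd)) := by
      ext z
      simp only [mem_inter, mem_union]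
      constructor
      · rintro ⟨hzC, hzD⟩
        rcases hcov z (fun h => hiD (h ▸ hzD)) with h | h
        · exact Or.inl ⟨hzC, h, hzD⟩
        · exact Or.inr ⟨hzC, h, hzD⟩
      · rintro (⟨hzC, _, hzD⟩ | ⟨hzC, _, hzD⟩) <;> exact ⟨hzC, hzD⟩
    rw [hsplit]
    apply Finset.card_union_of_disjoint
    rw [Finset.disjoint_left]
    intro z hz1 hz2
    exact Finset.disjoint_left.mp hTV (mem_inter.mp (mem_inter.mp hz1).2).1
      (mem_inter.mp (mem_inter.mp hz2).2).1
  -- sums over the other parts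
  have haT : (C∩T).card + (∑ D ∈ σ.parts.erase C, (D∩T).card) = T.card := by
    rw [← sum_inter_card σ T]
    exact Finset.add_sum_erase _ (fun D => (D∩T).card) hC
  have hxV : (C∩V).card + (∑ D ∈ σ.parts.erase C, (D∩V).card) = V.card := by
    rw [← sum_inter_card σ V]
    exact Finset.add_sum_erase _ (fun D => (D∩V).card) hC
  set a := (C∩T).card with hadef
  set x := (C∩V).card with hxdef
  set a' := ∑ D ∈ σ.parts.erase C, (D∩T).card with ha'def
  set x' := ∑ D ∈ σ.parts.erase C, (D∩V).card with hx'def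
  set b := (C∩(T∩Dd)).card with hbdef
  set g := (C∩(V∩Dd)).card with hgdef
  -- i not in other parts
  have hnotin : ∀ D ∈ σ.parts.erase C, i ∉ D := by
    intro D hD hiD'
    have h1 : σ.part i = D := σ.part_eq_of_mem (mem_of_mem_erase hD) hiD'
    have h2 : D ≠ C := (Finset.mem_erase.mp hD).1
    exact h2 (h1 ▸ hCdef ▸ rfl)
  -- upper bound for the sum over the other parts
  have hothers : ∑ D ∈ σ.parts.erase C, ∑ j ∈ D, faUtil n (traps i T V Dd j) j D
      ≤ (a' : ℚ) * ((a' : ℚ) - 1) + (x' : ℚ) * ((x' : ℚ) - 1) := by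
    have hstep : ∀ D ∈ σ.parts.erase C,
        ∑ j ∈ D, faUtil n (traps i T V Dd j) j D
          ≤ ((D∩T).card : ℚ) * (((D∩T).card : ℚ) - 1)
            + ((D∩V).card : ℚ) * (((D∩V).card : ℚ) - 1) := by
      intro D hD
      rw [sum_util_noI hiT hiV hTV hcov D (hnotin D hD)]
      have : (0:ℚ) ≤ 2 * ((D∩T).card : ℚ) * ((D∩V).card) / n := by positivity
      linarith
    calc ∑ D ∈ σ.parts.erase C, ∑ j ∈ D, faUtil n (traps i T V Dd j) j D
        ≤ ∑ D ∈ σ.parts.erase C, (((D∩T).card : ℚ) * (((D∩T).card : ℚ) - 1)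
            + ((D∩V).card : ℚ) * (((D∩V).card : ℚ) - 1)) := Finset.sum_le_sum hstep
      _ = (∑ D ∈ σ.parts.erase C, ((D∩T).card : ℚ) * (((D∩T).card : ℚ) - 1))
          + ∑ D ∈ σ.parts.erase C, ((D∩V).card : ℚ) * (((D∩V).card : ℚ) - 1) :=
            Finset.sum_add_distrib
      _ ≤ (a' : ℚ) * ((a' : ℚ) - 1) + (x' : ℚ) * ((x' : ℚ) - 1) := by
          have q1 := qsuper (σ.parts.erase C) (fun D => (D∩T).card)
          have q2 := qsuper (σ.parts.erase C) (fun D => (D∩V).card)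
          exact add_le_add q1 q2
  -- the value of C
  have hCval := sum_util_I hiT hiV hTV hcov hiD C hiC
  have hbgQ : ((C∩Dd).card : ℚ) = (b:ℚ) + (g:ℚ) := by exact_mod_cast hbg
  rw [hbgQ] at hCval
  -- upper bound on the social welfare of σ
  have hUB : faSW n (traps i T V Dd) σ
      ≤ ((a:ℚ) * a + (x:ℚ) * ((x:ℚ)-1) + ((b:ℚ) + g)
          - ((a:ℚ)*x + (x:ℚ)*((a:ℚ)+1) + ((a:ℚ) + (x:ℚ) - ((b:ℚ)+g)))/n)
        + ((a' : ℚ) * ((a' : ℚ) - 1) + (x' : ℚ) * ((x' : ℚ) - 1)) := by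
    have hsplitSW : faSW n (traps i T V Dd) σ
        = (∑ j ∈ C, faUtil n (traps i T V Dd j) j C)
          + ∑ D ∈ σ.parts.erase C, ∑ j ∈ D, faUtil n (traps i T V Dd j) j D :=
      (Finset.add_sum_erase _ (fun D => ∑ j ∈ D, faUtil n (traps i T V Dd j) j D) hC).symm
    rw [hsplitSW, hCval]
    linarith [hothers]
  -- natural-number facts for the numeric lemma
  have hbβ : b ≤ (Dd∩T).card := by
    apply Finset.card_le_card
    intro z hz
    have h1 := mem_inter.mp (mem_inter.mp hz).2
    exact mem_inter.mpr ⟨h1.2, h1.1⟩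
  have hba : b ≤ a := by
    apply Finset.card_le_card
    intro z hz
    exact mem_inter.mpr ⟨(mem_inter.mp hz).1, (mem_inter.mp (mem_inter.mp hz).2).1⟩
  have hgγ : g ≤ (Dd∩V).card := by
    apply Finset.card_le_card
    intro z hz
    have h1 := mem_inter.mp (mem_inter.mp hz).2
    exact mem_inter.mpr ⟨h1.2, h1.1⟩
  have hgx : g ≤ x := by
    apply Finset.card_le_card
    intro z hz
    exact mem_inter.mpr ⟨(mem_inter.mp hz).1, (mem_inter.mp (mem_inter.mp hz).2).1⟩
  have hnn : n = 1 + (a + a') + (x + x') := by omega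
  have hne' : ¬(a' = 0 ∧ x = 0) := by
    rintro ⟨ha'0, hx0⟩
    apply hnePart
    have hCV : C ∩ V = ∅ := Finset.card_eq_zero.mp hx0
    have haTc : a = T.card := by omega
    have hCT : C ∩ T = T := by
      apply Finset.eq_of_subset_of_card_le inter_subset_right
      omega
    ext z
    simp only [mem_insert]
    constructor
    · intro hzC
      by_cases hz : z = i
      · exact Or.inl hz
      · rcases hcov z hz with h | h
        · exact Or.inr h
        · exfalso
          have : z ∈ C ∩ V := mem_inter.mpr ⟨hzC, h⟩
          rw [hCV] at this
          exact notMem_empty z this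
    · rintro (rfl | hzT)
      · exact hiC
      · have : z ∈ C ∩ T := hCT.symm ▸ hzT
        exact (mem_inter.mp this).1
  -- integer inequality
  have hZ := MNUMZ (n:ℤ) (a:ℤ) (a':ℤ) (x:ℤ) (x':ℤ) (b:ℤ) (g:ℤ)
      ((Dd∩T).card : ℤ) ((Dd∩V).card : ℤ)
      (Int.natCast_nonneg a) (Int.natCast_nonneg a') (Int.natCast_nonneg x)
      (Int.natCast_nonneg x') (Int.natCast_nonneg b) (Int.natCast_nonneg g)
      (Int.natCast_nonneg _) (Int.natCast_nonneg _)
      (by exact_mod_cast hbβ) (by exact_mod_cast hba) (by exact_mod_cast hgx)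
      (by exact_mod_cast hgγ)
      (by exact_mod_cast hnn)
      (by
        intro hvz
        have hv1 : 1 ≤ V.card := by
          have : (1:ℤ) ≤ (x:ℤ) + (x':ℤ) := hvz
          have h2 : 1 ≤ x + x' := by exact_mod_cast this
          omega
        have h3 := H1 hv1
        have hT' : T.card = a + a' := haT.symm
        have hV' : V.card = x + x' := hxV.symm
        rw [hT', hV'] at h3
        exact_mod_cast h3)
      (by
        intro hvz
        have hv1 : 1 ≤ V.card := by
          have : (1:ℤ) ≤ (x:ℤ) + (x':ℤ) := hvz
          have h2 : 1 ≤ x + x' := by exact_mod_cast this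
          omega
        have h3 := H2 hv1
        have hT' : T.card = a + a' := haT.symm
        have hV' : V.card = x + x' := hxV.symm
        rw [hT', hV'] at h3
        have hcast : (((a+a') * (n-1) + 2*(x+x') + (Dd ∩ T).card * (n+1) : ℕ) : ℤ)
            = ((a:ℤ)+(a':ℤ))*((n:ℤ)-1) + 2*((x:ℤ)+(x':ℤ)) + ((Dd∩T).card:ℤ)*((n:ℤ)+1) := by
          push_cast [Nat.cast_sub (by omega : 1 ≤ n)]
          ring
        calc ((Dd∩V).card:ℤ)*((n:ℤ)+1) + 1
            = (((Dd ∩ V).card * (n+1) + 1 : ℕ) : ℤ) := by push_cast; ring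
          _ ≤ (((a+a') * (n-1) + 2*(x+x') + (Dd ∩ T).card * (n+1) : ℕ) : ℤ) := by
              exact_mod_cast h3
          _ = _ := hcast)
      (by
        rintro ⟨h1, h2⟩
        exact hne' ⟨by exact_mod_cast h1, by exact_mod_cast h2⟩)
  -- pass to ℚ
  have hkey : (0:ℚ) < 2*(a:ℚ)*(a':ℚ)*(n:ℚ) + (a':ℚ)*((n:ℚ)-1) + 2*(x:ℚ)*(x':ℚ)*(n:ℚ)
      + (((Dd∩T).card:ℚ) - (b:ℚ) - (g:ℚ))*((n:ℚ)+1) + 2*(a:ℚ)*(x:ℚ) + 2*(x:ℚ) := by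
    have := hZ
    have hcast : ((2*(a:ℤ)*(a':ℤ)*(n:ℤ) + (a':ℤ)*((n:ℤ)-1) + 2*(x:ℤ)*(x':ℤ)*(n:ℤ)
        + (((Dd∩T).card:ℤ) - (b:ℤ) - (g:ℤ))*((n:ℤ)+1) + 2*(a:ℤ)*(x:ℤ) + 2*(x:ℤ) : ℤ) : ℚ)
        = 2*(a:ℚ)*(a':ℚ)*(n:ℚ) + (a':ℚ)*((n:ℚ)-1) + 2*(x:ℚ)*(x':ℚ)*(n:ℚ)
      + (((Dd∩T).card:ℚ) - (b:ℚ) - (g:ℚ))*((n:ℚ)+1) + 2*(a:ℚ)*(x:ℚ) + 2*(x:ℚ) := by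
      push_cast
      ring
    rw [← hcast]
    exact_mod_cast this
  -- the gap identity
  have hmk := faSW_mkTwo hiT hiV hTV hcov hiD
  have hΘ : (T.card : ℚ) = (a:ℚ) + (a':ℚ) := by exact_mod_cast haT.symm
  have hv : (V.card : ℚ) = (x:ℚ) + (x':ℚ) := by exact_mod_cast hxV.symm
  have hgap : faSW n (traps i T V Dd) (mkTwo i T V hiV hTV hcov)
      - (((a:ℚ) * a + (x:ℚ) * ((x:ℚ)-1) + ((b:ℚ) + g)
          - ((a:ℚ)*x + (x:ℚ)*((a:ℚ)+1) + ((a:ℚ) + (x:ℚ) - ((b:ℚ)+g)))/n)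
        + ((a' : ℚ) * ((a' : ℚ) - 1) + (x' : ℚ) * ((x' : ℚ) - 1)))
      = (2*(a:ℚ)*(a':ℚ)*(n:ℚ) + (a':ℚ)*((n:ℚ)-1) + 2*(x:ℚ)*(x':ℚ)*(n:ℚ)
      + (((Dd∩T).card:ℚ) - (b:ℚ) - (g:ℚ))*((n:ℚ)+1) + 2*(a:ℚ)*(x:ℚ) + 2*(x:ℚ)) / n := by
    rw [hmk, hΘ, hv]
    field_simp
    ring
  have hlt : faSW n (traps i T V Dd) σ
      < faSW n (traps i T V Dd) (mkTwo i T V hiV hTV hcov) := by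
    have hpos : (0:ℚ) < (2*(a:ℚ)*(a':ℚ)*(n:ℚ) + (a':ℚ)*((n:ℚ)-1) + 2*(x:ℚ)*(x':ℚ)*(n:ℚ)
      + (((Dd∩T).card:ℚ) - (b:ℚ) - (g:ℚ))*((n:ℚ)+1) + 2*(a:ℚ)*(x:ℚ) + 2*(x:ℚ)) / n :=
      div_pos hkey hn0'
    linarith [hUB, hgap]
  linarith [hopt]

end SumLemmas
lemma traps_valid (i : Fin n) (T V Dd : Finset (Fin n)) (hiD : i ∉ Dd) :
    ∀ j, j ∉ traps i T V Dd j := by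
  intro j
  unfold traps
  by_cases hj : j = i
  · subst hj
    simp only [if_pos rfl]
    exact hiD
  · rw [if_neg hj]
    by_cases hjT : j ∈ T
    · rw [if_pos hjT]
      simp only [mem_insert, not_or]
      exact ⟨hj, Finset.notMem_erase j T⟩
    · rw [if_neg hjT]
      exact Finset.notMem_erase j V

end NOMFA

/-- Any mechanism returning, for every declaration profile, an optimal partition with the
minimum number of coalitions among all optimal partitions is non-obviously manipulable:
for every agent `i`, true type `t` and declaration `di`, both
`max_{π ∈ Π_i(t,M)} u_i(π) ≥ max_{π ∈ Π_i(di,M)} u_i(π)` (here: every outcome reachable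
by declaring `di` is dominated by some outcome reachable by declaring `t`) and
`min_{π ∈ Π_i(t,M)} u_i(π) ≥ min_{π ∈ Π_i(di,M)} u_i(π)` (here: every outcome reachable
by declaring `t` dominates some outcome reachable by declaring `di`) hold. -/
theorem stmt7 (n : ℕ) (hn : 0 < n)
    (M : (Fin n → Finset (Fin n)) → Finpartition (univ : Finset (Fin n)))
    (hM : ∀ d : Fin n → Finset (Fin n), (∀ j, j ∉ d j) →
      (∀ σ : Finpartition (univ : Finset (Fin n)), faSW n d σ ≤ faSW n d (M d)) ∧
      ∀ σ : Finpartition (univ : Finset (Fin n)),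
        (∀ σ' : Finpartition (univ : Finset (Fin n)), faSW n d σ' ≤ faSW n d σ) →
          (M d).parts.card ≤ σ.parts.card) :
    ∀ (i : Fin n) (t di : Finset (Fin n)), i ∉ t → i ∉ di →
      -- Condition 1 (best case):
      (∀ d : Fin n → Finset (Fin n), (∀ j, j ∉ d j) → d i = di →
        ∃ d' : Fin n → Finset (Fin n), (∀ j, j ∉ d' j) ∧ d' i = t ∧
          faAgentUtil n t i (M d) ≤ faAgentUtil n t i (M d')) ∧
      -- Condition 2 (worst case):
      (∀ d' : Fin n → Finset (Fin n), (∀ j, j ∉ d' j) → d' i = t →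
        ∃ d : Fin n → Finset (Fin n), (∀ j, j ∉ d j) ∧ d i = di ∧
          faAgentUtil n t i (M d) ≤ faAgentUtil n t i (M d')) := by

  intro i t di hit hidi
  constructor
  · -- Condition 1
    intro d hd hdi
    set V : Finset (Fin n) := (univ.erase i) \ t with hVdef
    have hiT : i ∉ t := hit
    have hiV : i ∉ V := by
      intro h
      exact (Finset.mem_erase.mp (Finset.mem_sdiff.mp h).1).1 rfl
    have hTV : Disjoint t V := by
      rw [Finset.disjoint_left]
      intro z hz1 hz2
      exact (Finset.mem_sdiff.mp hz2).2 hz1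
    have hcov : ∀ x : Fin n, x ≠ i → x ∈ t ∨ x ∈ V := by
      intro x hx
      by_cases hxt : x ∈ t
      · exact Or.inl hxt
      · exact Or.inr (Finset.mem_sdiff.mpr ⟨Finset.mem_erase.mpr ⟨hx, mem_univ x⟩, hxt⟩)
    refine ⟨NOMFA.traps i t V t, NOMFA.traps_valid i t V t hit, by simp [NOMFA.traps], ?_⟩
    obtain ⟨hopt', _⟩ := hM (NOMFA.traps i t V t) (NOMFA.traps_valid i t V t hit)
    have hγ : (t ∩ V).card = 0 := by
      rw [Finset.card_eq_zero, ← Finset.disjoint_iff_inter_eq_empty]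
      exact hTV
    have hmaster := NOMFA.master hiT hiV hTV hcov hit
      (by
        intro hv
        rw [hγ]
        have h1 : 1 ≤ 2*(t.card+1) := by omega
        calc 0 * (n+1) + 1 = 1 := by ring
          _ ≤ (2*(t.card+1)) * V.card := Nat.one_le_iff_ne_zero.mpr (by positivity)
          _ = 2*(t.card+1)*V.card := by ring)
      (by
        intro hv
        rw [hγ]
        omega)
      (M (NOMFA.traps i t V t))
      (hopt' _)
    -- value at the truthful profile
    have hval' : faAgentUtil n t i (M (NOMFA.traps i t V t)) = (t.card : ℚ) := by
      rw [NOMFA.faAgentUtil_eq, hmaster]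
      unfold faUtil
      have h1 : (insert i t) ∩ t = t := Finset.inter_eq_right.mpr (Finset.subset_insert i t)
      have h2 : (insert i t) \ (t ∪ {i}) = ∅ := by
        rw [Finset.sdiff_eq_empty_iff_subset]
        intro z hz
        rcases Finset.mem_insert.mp hz with rfl | hz
        · exact Finset.mem_union_right _ (mem_singleton_self z)
        · exact Finset.mem_union_left _ hz
      rw [h1, h2]
      simp
    rw [hval', NOMFA.faAgentUtil_eq]
    exact NOMFA.faUtil_le_card t i _
  · -- Condition 2
    intro d' hd' hd'i
    obtain ⟨hopt', hmin'⟩ := hM d' hd'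
    set C' : Finset (Fin n) := (M d').part i with hC'def
    have hiC' : i ∈ C' := (M d').mem_part (mem_univ i)
    have hC'mem : C' ∈ (M d').parts := (M d').part_mem.2 (mem_univ i)
    set V : Finset (Fin n) := t \ C' with hVdef
    set T : Finset (Fin n) := (univ.erase i) \ V with hTdef
    have hiT : i ∉ T := by
      intro h
      exact (Finset.mem_erase.mp (Finset.mem_sdiff.mp h).1).1 rfl
    have hiV : i ∉ V := fun h => hit (Finset.mem_sdiff.mp h).1
    have hTV : Disjoint T V := by
      rw [Finset.disjoint_left]
      intro z hz1 hz2
      exact (Finset.mem_sdiff.mp hz1).2 hz2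
    have hcov : ∀ x : Fin n, x ≠ i → x ∈ T ∨ x ∈ V := by
      intro x hx
      by_cases hxV : x ∈ V
      · exact Or.inr hxV
      · exact Or.inl (Finset.mem_sdiff.mpr ⟨Finset.mem_erase.mpr ⟨hx, mem_univ x⟩, hxV⟩)
    refine ⟨NOMFA.traps i T V di, NOMFA.traps_valid i T V di hidi, by simp [NOMFA.traps], ?_⟩
    obtain ⟨hoptL, _⟩ := hM (NOMFA.traps i T V di) (NOMFA.traps_valid i T V di hidi)
    -- cardinal bookkeeping
    have hcards : 1 + T.card + V.card = n := by
      have h1 : insert i (T ∪ V) = (univ : Finset (Fin n)) := by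
        apply Finset.eq_univ_of_forall
        intro z
        simp only [mem_insert, mem_union]
        by_cases hz : z = i
        · exact Or.inl hz
        · rcases hcov z hz with h | h
          · exact Or.inr (Or.inl h)
          · exact Or.inr (Or.inr h)
      have h2 : (insert i (T ∪ V)).card = n := by
        rw [h1, Finset.card_univ, Fintype.card_fin]
      rw [Finset.card_insert_of_notMem (by
          simp only [mem_union]
          rintro (h | h)
          · exact hiT h
          · exact hiV h), Finset.card_union_of_disjoint hTV] at h2
      omega
    -- the star facts
    have hτ : (∑ P ∈ (M d').parts.erase C', (P∩t).card) = V.card := by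
      have h1 : (C'∩t).card + (∑ P ∈ (M d').parts.erase C', (P∩t).card) = t.card := by
        rw [← NOMFA.sum_inter_card (M d') t]
        exact Finset.add_sum_erase _ (fun P => (P∩t).card) hC'mem
      have h2 : (t \ C').card + (t ∩ C').card = t.card := Finset.card_sdiff_add_card_inter t C'
      have h3 : (t ∩ C').card = (C' ∩ t).card := by rw [Finset.inter_comm]
      have h4 : V.card = (t \ C').card := rfl
      omega
    have hcB : C'.card + (∑ P ∈ (M d').parts.erase C', P.card) = n := by
      have h1 := (M d').sum_card_parts
      rw [Finset.card_univ, Fintype.card_fin] at h1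
      have h2 : C'.card + ∑ P ∈ (M d').parts.erase C', P.card
          = ∑ P ∈ (M d').parts, P.card :=
        Finset.add_sum_erase _ (fun P => P.card) hC'mem
      omega
    have hτB : (∑ P ∈ (M d').parts.erase C', (P∩t).card)
        ≤ (∑ P ∈ (M d').parts.erase C', P.card) :=
      Finset.sum_le_sum (fun P _ => Finset.card_le_card inter_subset_left)
    have hkey : 1 ≤ V.card →
        (n+1) * (∑ P ∈ (M d').parts.erase C', (P∩t).card) + 1
          ≤ 2 * C'.card * (∑ P ∈ (M d').parts.erase C', P.card) := by
      intro hv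
      -- the erase set is nonempty
      have hne : ((M d').parts.erase C').Nonempty := by
        obtain ⟨z, hz⟩ := Finset.card_pos.mp hv
        have hzt : z ∈ t := (Finset.mem_sdiff.mp hz).1
        have hznC : z ∉ C' := (Finset.mem_sdiff.mp hz).2
        refine ⟨(M d').part z, Finset.mem_erase.mpr ⟨?_, (M d').part_mem.2 (mem_univ z)⟩⟩
        intro h
        exact hznC (h ▸ (M d').mem_part (mem_univ z))
      have hstar : ∀ P ∈ (M d').parts.erase C',
          (n+1) * (P∩t).card + 1 ≤ 2 * C'.card * P.card := by
        intro P hP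
        exact NOMFA.star t i d' hd'i (M d') hopt' hmin' P (Finset.mem_of_mem_erase hP)
          (Finset.mem_erase.mp hP).1
      calc (n+1) * (∑ P ∈ (M d').parts.erase C', (P∩t).card) + 1
          ≤ (∑ P ∈ (M d').parts.erase C', ((n+1) * (P∩t).card + 1)) := by
            rw [Finset.sum_add_distrib, Finset.sum_const, ← Finset.mul_sum]
            have : 1 ≤ ((M d').parts.erase C').card := Finset.card_pos.mpr hne
            simp only [smul_eq_mul, mul_one]
            omega
        _ ≤ ∑ P ∈ (M d').parts.erase C', 2 * C'.card * P.card :=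
            Finset.sum_le_sum hstar
        _ = 2 * C'.card * (∑ P ∈ (M d').parts.erase C', P.card) := by
            rw [Finset.mul_sum]
    -- numeric hypotheses for master
    have hγτ : (di ∩ V).card ≤ V.card := Finset.card_le_card inter_subset_right
    have hnum : 1 ≤ V.card →
        ((di ∩ V).card * (n+1) + 1 ≤ 2*(T.card+1)*V.card ∧
         (di ∩ V).card * (n+1) + 1 ≤ T.card*(n-1) + 2*V.card) := by
      intro hv
      have := NOMFA.NUM n C'.card V.card (di∩V).card T.card
        (∑ P ∈ (M d').parts.erase C', P.card)
        hγτ hcB (hτ ▸ hτB) hv (by omega) (Finset.card_pos.mpr ⟨i, hiC'⟩)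
        (fun _ => hτ ▸ hkey hv)
      exact this
    have hmaster := NOMFA.master hiT hiV hTV hcov hidi
      (fun hv => (hnum hv).1)
      (fun hv => by
        have := (hnum hv).2
        omega)
      (M (NOMFA.traps i T V di))
      (hoptL _)
    -- final comparison
    rw [NOMFA.faAgentUtil_eq, NOMFA.faAgentUtil_eq, hmaster, ← hC'def]
    unfold faUtil
    have h1 : (insert i T) ∩ t = C' ∩ t := by
      ext z
      simp only [mem_inter, mem_insert]
      constructor
      · rintro ⟨rfl | hzT, hzt⟩
        · exact absurd hzt hit
        · have hznV : z ∉ V := (Finset.mem_sdiff.mp hzT).2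
          have hzC : z ∈ C' := by
            by_contra hzc
            exact hznV (Finset.mem_sdiff.mpr ⟨hzt, hzc⟩)
          exact ⟨hzC, hzt⟩
      · rintro ⟨hzC, hzt⟩
        have hzi : z ≠ i := fun h => hit (h ▸ hzt)
        have hznV : z ∉ V := fun h => (Finset.mem_sdiff.mp h).2 hzC
        exact ⟨Or.inr (Finset.mem_sdiff.mpr ⟨Finset.mem_erase.mpr ⟨hzi, mem_univ z⟩, hznV⟩), hzt⟩
    have h2 : (insert i T) \ (t ∪ {i}) = univ \ (t ∪ {i}) := by
      ext z
      simp only [mem_sdiff, mem_insert, mem_union, mem_singleton, mem_univ, true_and, not_or]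
      constructor
      · rintro ⟨_, h⟩
        exact h
      · rintro ⟨hzt, hzi⟩
        refine ⟨Or.inr ?_, hzt, hzi⟩
        apply Finset.mem_sdiff.mpr
        exact ⟨Finset.mem_erase.mpr ⟨hzi, mem_univ z⟩, fun h => hzt (Finset.mem_sdiff.mp h).1⟩
    rw [h1, h2]
    have h3 : (C' ∩ t).card = (C' ∩ t).card := rfl
    have h4 : ((C' \ (t ∪ {i})).card : ℚ) ≤ ((univ \ (t ∪ {i}) : Finset (Fin n)).card : ℚ) := by
      exact_mod_cast Nat.cast_le.2 (Finset.card_le_card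
        (Finset.sdiff_subset_sdiff (Finset.subset_univ C') (le_refl _)))
    have hn' : (0:ℚ) < n := by exact_mod_cast hn
    have h5 : ((C' \ (t ∪ {i})).card : ℚ)/n ≤ ((univ \ (t ∪ {i}) : Finset (Fin n)).card : ℚ)/n := by
      gcongr
    linarith
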